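/- arXiv:1708.06298 — 3 statements merged into one kernel-verified Lean document; each statement's English description precedes it below -/
import Mathlib

section
/- For any positive semidefinite Hermitian operators M, N on C^{D_1} ⊗ C^{D_2} (n = 2 parties) and T = {1,2}, the shadow inequality holds: Tr(M)Tr(N) − Tr[Tr_2(M)Tr_2(N)] − Tr[Tr_1(M)Tr_1(N)] + Tr(MN) ≥ 0. -/
open Matrix BigOperators ComplexOrder
open scoped MatrixOrder

section helpers
variable {R : Type*} [AddCommMonoid R]
variable {α β γ δ ε σ : Type*} [Fintype α] [Fintype β] [Fintype γ] [Fintype δ] [Fintype ε]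
  [Fintype σ]

private lemma pull1 (F : α → σ → R) : ∑ a, ∑ x, F a x = ∑ x, ∑ a, F a x := Finset.sum_comm

private lemma pull2 (F : α → β → σ → R) :
    ∑ a, ∑ b, ∑ x, F a b x = ∑ x, ∑ a, ∑ b, F a b x :=
  (Finset.sum_congr rfl fun a _ => pull1 (F a)).trans (pull1 _)

private lemma pull3 (F : α → β → γ → σ → R) :
    ∑ a, ∑ b, ∑ c, ∑ x, F a b c x = ∑ x, ∑ a, ∑ b, ∑ c, F a b c x :=
  (Finset.sum_congr rfl fun a _ => pull2 (F a)).trans (pull1 _)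

private lemma pull4 (F : α → β → γ → δ → σ → R) :
    ∑ a, ∑ b, ∑ c, ∑ d, ∑ x, F a b c d x = ∑ x, ∑ a, ∑ b, ∑ c, ∑ d, F a b c d x :=
  (Finset.sum_congr rfl fun a _ => pull3 (F a)).trans (pull1 _)

private lemma pull5 (F : α → β → γ → δ → ε → σ → R) :
    ∑ a, ∑ b, ∑ c, ∑ d, ∑ e, ∑ x, F a b c d e x
      = ∑ x, ∑ a, ∑ b, ∑ c, ∑ d, ∑ e, F a b c d e x :=
  (Finset.sum_congr rfl fun a _ => pull4 (F a)).trans (pull1 _)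

end helpers

/-- Partial trace over the second factor. -/
noncomputable def ptrace2 {A B : Type*} [Fintype B] (M : Matrix (A × B) (A × B) ℂ) :
    Matrix A A ℂ :=
  Matrix.of fun i j => ∑ k, M (i, k) (j, k)

/-- Partial trace over the first factor. -/
noncomputable def ptrace1 {A B : Type*} [Fintype A] (M : Matrix (A × B) (A × B) ℂ) :
    Matrix B B ℂ :=
  Matrix.of fun i j => ∑ k, M (k, i) (k, j)

private lemma expand_traces {D1 D2 : ℕ}
    (M N : Matrix (Fin D1 × Fin D2) (Fin D1 × Fin D2) ℂ) :
    Matrix.trace M * Matrix.trace N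
      - Matrix.trace (ptrace2 M * ptrace2 N)
      - Matrix.trace (ptrace1 M * ptrace1 N)
      + Matrix.trace (M * N)
    = ∑ i : Fin D1, ∑ j : Fin D1, ∑ k : Fin D2, ∑ l : Fin D2,
        (M (i,k) (i,k) * N (j,l) (j,l) - M (i,k) (j,k) * N (j,l) (i,l)
         - M (i,k) (i,l) * N (j,l) (j,k) + M (i,k) (j,l) * N (j,l) (i,k)) := by
  have h1 : Matrix.trace M * Matrix.trace N
      = ∑ i : Fin D1, ∑ j : Fin D1, ∑ k : Fin D2, ∑ l : Fin D2,
          M (i,k) (i,k) * N (j,l) (j,l) := by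
    simp only [Matrix.trace, Matrix.diag]
    rw [Finset.sum_mul_sum]
    simp only [Fintype.sum_prod_type]
    exact Finset.sum_congr rfl fun i _ => Finset.sum_comm
  have h2 : Matrix.trace (ptrace2 M * ptrace2 N)
      = ∑ i : Fin D1, ∑ j : Fin D1, ∑ k : Fin D2, ∑ l : Fin D2,
          M (i,k) (j,k) * N (j,l) (i,l) := by
    simp only [Matrix.trace, Matrix.diag, Matrix.mul_apply, ptrace2, Matrix.of_apply]
    exact Finset.sum_congr rfl fun i _ => Finset.sum_congr rfl fun j _ =>
      Finset.sum_mul_sum _ _ _ _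
  have h3 : Matrix.trace (ptrace1 M * ptrace1 N)
      = ∑ i : Fin D1, ∑ j : Fin D1, ∑ k : Fin D2, ∑ l : Fin D2,
          M (i,k) (i,l) * N (j,l) (j,k) := by
    simp only [Matrix.trace, Matrix.diag, Matrix.mul_apply, ptrace1, Matrix.of_apply]
    rw [show (∑ k : Fin D2, ∑ l : Fin D2,
          (∑ i : Fin D1, M (i,k) (i,l)) * ∑ j : Fin D1, N (j,l) (j,k))
        = ∑ k : Fin D2, ∑ l : Fin D2, ∑ i : Fin D1, ∑ j : Fin D1,
            M (i,k) (i,l) * N (j,l) (j,k) from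
      Finset.sum_congr rfl fun k _ => Finset.sum_congr rfl fun l _ =>
        Finset.sum_mul_sum _ _ _ _]
    rw [pull2 (fun k l i => ∑ j, M (i,k) (i,l) * N (j,l) (j,k))]
    exact Finset.sum_congr rfl fun i _ => pull2 _
  have h4 : Matrix.trace (M * N)
      = ∑ i : Fin D1, ∑ j : Fin D1, ∑ k : Fin D2, ∑ l : Fin D2,
          M (i,k) (j,l) * N (j,l) (i,k) := by
    simp only [Matrix.trace, Matrix.diag, Matrix.mul_apply, Fintype.sum_prod_type]
    exact Finset.sum_congr rfl fun i _ => Finset.sum_comm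
  rw [h1, h2, h3, h4]
  simp only [Finset.sum_sub_distrib, Finset.sum_add_distrib]

set_option maxHeartbeats 1000000 in
private lemma key_nonneg {D1 D2 : ℕ} (u v : Fin D1 × Fin D2 → ℂ) :
    0 ≤ ∑ i : Fin D1, ∑ j : Fin D1, ∑ k : Fin D2, ∑ l : Fin D2,
      (u (i,k) * star (u (i,k)) * (v (j,l) * star (v (j,l)))
       - u (i,k) * star (u (j,k)) * (v (j,l) * star (v (i,l)))
       - u (i,k) * star (u (i,l)) * (v (j,l) * star (v (j,k)))
       + u (i,k) * star (u (j,l)) * (v (j,l) * star (v (i,k)))) := by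
  set A : Fin D1 → Fin D1 → Fin D2 → Fin D2 → ℂ := fun i j k l =>
    u (i,k) * v (j,l) - u (j,k) * v (i,l) - u (i,l) * v (j,k) + u (j,l) * v (i,k)
    with hAdef
  have hA1 : ∀ i j k l, A j i k l = -A i j k l := by
    intro i j k l; simp only [hAdef]; ring
  have hA2 : ∀ i j k l, A i j l k = -A i j k l := by
    intro i j k l; simp only [hAdef]; ring
  have hA3 : ∀ i j k l, A j i l k = A i j k l := by
    intro i j k l; simp only [hAdef]; ring
  set B1 : ℂ := ∑ i : Fin D1, ∑ j : Fin D1, ∑ k : Fin D2, ∑ l : Fin D2,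
      A i j k l * star (u (i,k) * v (j,l)) with hB1def
  have hB2 : (∑ i : Fin D1, ∑ j : Fin D1, ∑ k : Fin D2, ∑ l : Fin D2,
      A i j k l * star (u (j,k) * v (i,l))) = -B1 := by
    have s1 : (∑ i : Fin D1, ∑ j : Fin D1, ∑ k : Fin D2, ∑ l : Fin D2,
        A i j k l * star (u (j,k) * v (i,l)))
        = ∑ i : Fin D1, ∑ j : Fin D1, ∑ k : Fin D2, ∑ l : Fin D2,
        A j i k l * star (u (i,k) * v (j,l)) := Finset.sum_comm
    have s2 : (∑ i : Fin D1, ∑ j : Fin D1, ∑ k : Fin D2, ∑ l : Fin D2,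
        A j i k l * star (u (i,k) * v (j,l)))
        = ∑ i : Fin D1, ∑ j : Fin D1, ∑ k : Fin D2, ∑ l : Fin D2,
        -(A i j k l * star (u (i,k) * v (j,l))) :=
      Finset.sum_congr rfl fun i _ => Finset.sum_congr rfl fun j _ =>
        Finset.sum_congr rfl fun k _ => Finset.sum_congr rfl fun l _ => by
          rw [hA1]; ring
    rw [s1, s2]
    simp only [Finset.sum_neg_distrib, hB1def]
  have hB3 : (∑ i : Fin D1, ∑ j : Fin D1, ∑ k : Fin D2, ∑ l : Fin D2,
      A i j k l * star (u (i,l) * v (j,k))) = -B1 := by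
    have s1 : (∑ i : Fin D1, ∑ j : Fin D1, ∑ k : Fin D2, ∑ l : Fin D2,
        A i j k l * star (u (i,l) * v (j,k)))
        = ∑ i : Fin D1, ∑ j : Fin D1, ∑ k : Fin D2, ∑ l : Fin D2,
        A i j l k * star (u (i,k) * v (j,l)) :=
      Finset.sum_congr rfl fun i _ => Finset.sum_congr rfl fun j _ => Finset.sum_comm
    have s2 : (∑ i : Fin D1, ∑ j : Fin D1, ∑ k : Fin D2, ∑ l : Fin D2,
        A i j l k * star (u (i,k) * v (j,l)))
        = ∑ i : Fin D1, ∑ j : Fin D1, ∑ k : Fin D2, ∑ l : Fin D2,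
        -(A i j k l * star (u (i,k) * v (j,l))) :=
      Finset.sum_congr rfl fun i _ => Finset.sum_congr rfl fun j _ =>
        Finset.sum_congr rfl fun k _ => Finset.sum_congr rfl fun l _ => by
          rw [hA2]; ring
    rw [s1, s2]
    simp only [Finset.sum_neg_distrib, hB1def]
  have hB4 : (∑ i : Fin D1, ∑ j : Fin D1, ∑ k : Fin D2, ∑ l : Fin D2,
      A i j k l * star (u (j,l) * v (i,k))) = B1 := by
    have s1 : (∑ i : Fin D1, ∑ j : Fin D1, ∑ k : Fin D2, ∑ l : Fin D2,
        A i j k l * star (u (j,l) * v (i,k)))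
        = ∑ i : Fin D1, ∑ j : Fin D1, ∑ k : Fin D2, ∑ l : Fin D2,
        A j i k l * star (u (i,l) * v (j,k)) := Finset.sum_comm
    have s2 : (∑ i : Fin D1, ∑ j : Fin D1, ∑ k : Fin D2, ∑ l : Fin D2,
        A j i k l * star (u (i,l) * v (j,k)))
        = ∑ i : Fin D1, ∑ j : Fin D1, ∑ k : Fin D2, ∑ l : Fin D2,
        A j i l k * star (u (i,k) * v (j,l)) :=
      Finset.sum_congr rfl fun i _ => Finset.sum_congr rfl fun j _ => Finset.sum_comm
    have s3 : (∑ i : Fin D1, ∑ j : Fin D1, ∑ k : Fin D2, ∑ l : Fin D2,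
        A j i l k * star (u (i,k) * v (j,l))) = B1 :=
      Finset.sum_congr rfl fun i _ => Finset.sum_congr rfl fun j _ =>
        Finset.sum_congr rfl fun k _ => Finset.sum_congr rfl fun l _ => by rw [hA3]
    rw [s1, s2, s3]
  have hAA : (∑ i : Fin D1, ∑ j : Fin D1, ∑ k : Fin D2, ∑ l : Fin D2,
      A i j k l * star (A i j k l)) = 4 * B1 := by
    have s0 : (∑ i : Fin D1, ∑ j : Fin D1, ∑ k : Fin D2, ∑ l : Fin D2,
        A i j k l * star (A i j k l))
        = ∑ i : Fin D1, ∑ j : Fin D1, ∑ k : Fin D2, ∑ l : Fin D2,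
          (A i j k l * star (u (i,k) * v (j,l)) - A i j k l * star (u (j,k) * v (i,l))
           - A i j k l * star (u (i,l) * v (j,k)) + A i j k l * star (u (j,l) * v (i,k))) :=
      Finset.sum_congr rfl fun i _ => Finset.sum_congr rfl fun j _ =>
        Finset.sum_congr rfl fun k _ => Finset.sum_congr rfl fun l _ => by
          conv_lhs => rw [hAdef]
          simp only [star_sub, star_add]
          ring
    rw [s0]
    simp only [Finset.sum_sub_distrib, Finset.sum_add_distrib]
    rw [hB2, hB3, hB4, ← hB1def]
    ring
  have hpos : (0:ℂ) ≤ ∑ i : Fin D1, ∑ j : Fin D1, ∑ k : Fin D2, ∑ l : Fin D2,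
      A i j k l * star (A i j k l) :=
    Finset.sum_nonneg fun i _ => Finset.sum_nonneg fun j _ =>
      Finset.sum_nonneg fun k _ => Finset.sum_nonneg fun l _ => mul_star_self_nonneg _
  rw [hAA] at hpos
  have hB1pos : (0:ℂ) ≤ B1 := by
    have h4 : (0:ℂ) ≤ 4⁻¹ := by
      rw [show ((4:ℂ)⁻¹) = ((4⁻¹:ℝ):ℂ) by push_cast; ring]
      exact_mod_cast (by norm_num : (0:ℝ) ≤ 4⁻¹)
    have := mul_nonneg h4 hpos
    rwa [inv_mul_cancel_left₀ (by norm_num)] at this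
  have hfinal : B1 = ∑ i : Fin D1, ∑ j : Fin D1, ∑ k : Fin D2, ∑ l : Fin D2,
      (u (i,k) * star (u (i,k)) * (v (j,l) * star (v (j,l)))
       - u (i,k) * star (u (j,k)) * (v (j,l) * star (v (i,l)))
       - u (i,k) * star (u (i,l)) * (v (j,l) * star (v (j,k)))
       + u (i,k) * star (u (j,l)) * (v (j,l) * star (v (i,k)))) := by
    have e2 : (∑ i : Fin D1, ∑ j : Fin D1, ∑ k : Fin D2, ∑ l : Fin D2,
        u (j,k) * star (u (i,k)) * (v (i,l) * star (v (j,l))))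
        = ∑ i : Fin D1, ∑ j : Fin D1, ∑ k : Fin D2, ∑ l : Fin D2,
        u (i,k) * star (u (j,k)) * (v (j,l) * star (v (i,l))) :=
      Finset.sum_comm (s := (Finset.univ : Finset (Fin D1)))
        (t := (Finset.univ : Finset (Fin D1)))
        (f := fun i j => ∑ k : Fin D2, ∑ l : Fin D2,
          u (j,k) * star (u (i,k)) * (v (i,l) * star (v (j,l))))
    have e3 : (∑ i : Fin D1, ∑ j : Fin D1, ∑ k : Fin D2, ∑ l : Fin D2,
        u (i,l) * star (u (i,k)) * (v (j,k) * star (v (j,l))))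
        = ∑ i : Fin D1, ∑ j : Fin D1, ∑ k : Fin D2, ∑ l : Fin D2,
        u (i,k) * star (u (i,l)) * (v (j,l) * star (v (j,k))) :=
      Finset.sum_congr rfl fun i _ => Finset.sum_congr rfl fun j _ => Finset.sum_comm
    have e4 : (∑ i : Fin D1, ∑ j : Fin D1, ∑ k : Fin D2, ∑ l : Fin D2,
        u (j,l) * star (u (i,k)) * (v (i,k) * star (v (j,l))))
        = ∑ i : Fin D1, ∑ j : Fin D1, ∑ k : Fin D2, ∑ l : Fin D2,
        u (i,k) * star (u (j,l)) * (v (j,l) * star (v (i,k))) := by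
      have s1 : (∑ i : Fin D1, ∑ j : Fin D1, ∑ k : Fin D2, ∑ l : Fin D2,
          u (j,l) * star (u (i,k)) * (v (i,k) * star (v (j,l))))
          = ∑ i : Fin D1, ∑ j : Fin D1, ∑ k : Fin D2, ∑ l : Fin D2,
          u (i,l) * star (u (j,k)) * (v (j,k) * star (v (i,l))) := Finset.sum_comm
      have s2 : (∑ i : Fin D1, ∑ j : Fin D1, ∑ k : Fin D2, ∑ l : Fin D2,
          u (i,l) * star (u (j,k)) * (v (j,k) * star (v (i,l))))
          = ∑ i : Fin D1, ∑ j : Fin D1, ∑ k : Fin D2, ∑ l : Fin D2,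
          u (i,k) * star (u (j,l)) * (v (j,l) * star (v (i,k))) :=
        Finset.sum_congr rfl fun i _ => Finset.sum_congr rfl fun j _ => Finset.sum_comm
      rw [s1, s2]
    have s0 : B1 = ∑ i : Fin D1, ∑ j : Fin D1, ∑ k : Fin D2, ∑ l : Fin D2,
        (u (i,k) * star (u (i,k)) * (v (j,l) * star (v (j,l)))
         - u (j,k) * star (u (i,k)) * (v (i,l) * star (v (j,l)))
         - u (i,l) * star (u (i,k)) * (v (j,k) * star (v (j,l)))
         + u (j,l) * star (u (i,k)) * (v (i,k) * star (v (j,l)))) := by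
      rw [hB1def]
      exact Finset.sum_congr rfl fun i _ => Finset.sum_congr rfl fun j _ =>
        Finset.sum_congr rfl fun k _ => Finset.sum_congr rfl fun l _ => by
          simp only [hAdef, star_mul']
          ring
    rw [s0]
    simp only [Finset.sum_sub_distrib, Finset.sum_add_distrib]
    rw [e2, e3, e4]
  rw [← hfinal]
  exact hB1pos

/-- The shadow inequality for `n = 2` parties and `T = {1,2}`:
for positive semidefinite `M`, `N` on `ℂ^{D₁} ⊗ ℂ^{D₂}`,
`Tr(M)Tr(N) − Tr[Tr₂(M)Tr₂(N)] − Tr[Tr₁(M)Tr₁(N)] + Tr(MN) ≥ 0`. -/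
theorem shadow_inequality_two_parties (D1 D2 : ℕ)
    (M N : Matrix (Fin D1 × Fin D2) (Fin D1 × Fin D2) ℂ)
    (hM : M.PosSemidef) (hN : N.PosSemidef) :
    0 ≤ Matrix.trace M * Matrix.trace N
        - Matrix.trace (ptrace2 M * ptrace2 N)
        - Matrix.trace (ptrace1 M * ptrace1 N)
        + Matrix.trace (M * N) := by
  rw [expand_traces M N]
  set f : (Fin D1 × Fin D2) → (Fin D1 × Fin D2) → ℂ := fun a x => CFC.sqrt M x a with hfdef
  set g : (Fin D1 × Fin D2) → (Fin D1 × Fin D2) → ℂ := fun b y => CFC.sqrt N y b with hgdef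
  have hMrep : ∀ x y, M x y = ∑ a, f a x * star (f a y) := by
    intro x y
    conv_lhs => rw [← CFC.sqrt_mul_sqrt_self M hM.nonneg]
    rw [Matrix.mul_apply]
    refine Finset.sum_congr rfl fun a _ => ?_
    congr 1
    exact ((CFC.sqrt_nonneg M).posSemidef.isHermitian.apply a y).symm
  have hNrep : ∀ x y, N x y = ∑ b, g b x * star (g b y) := by
    intro x y
    conv_lhs => rw [← CFC.sqrt_mul_sqrt_self N hN.nonneg]
    rw [Matrix.mul_apply]
    refine Finset.sum_congr rfl fun b _ => ?_
    congr 1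
    exact ((CFC.sqrt_nonneg N).posSemidef.isHermitian.apply b y).symm
  have step1 : (∑ i : Fin D1, ∑ j : Fin D1, ∑ k : Fin D2, ∑ l : Fin D2,
      (M (i,k) (i,k) * N (j,l) (j,l) - M (i,k) (j,k) * N (j,l) (i,l)
       - M (i,k) (i,l) * N (j,l) (j,k) + M (i,k) (j,l) * N (j,l) (i,k)))
      = ∑ i : Fin D1, ∑ j : Fin D1, ∑ k : Fin D2, ∑ l : Fin D2,
        ∑ a : Fin D1 × Fin D2, ∑ b : Fin D1 × Fin D2,
        (f a (i,k) * star (f a (i,k)) * (g b (j,l) * star (g b (j,l)))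
         - f a (i,k) * star (f a (j,k)) * (g b (j,l) * star (g b (i,l)))
         - f a (i,k) * star (f a (i,l)) * (g b (j,l) * star (g b (j,k)))
         + f a (i,k) * star (f a (j,l)) * (g b (j,l) * star (g b (i,k)))) :=
    Finset.sum_congr rfl fun i _ => Finset.sum_congr rfl fun j _ =>
      Finset.sum_congr rfl fun k _ => Finset.sum_congr rfl fun l _ => by
        rw [hMrep, hMrep, hMrep, hMrep, hNrep, hNrep, hNrep, hNrep,
          Finset.sum_mul_sum, Finset.sum_mul_sum, Finset.sum_mul_sum, Finset.sum_mul_sum]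
        simp only [Finset.sum_sub_distrib, Finset.sum_add_distrib]
  have step2 : (∑ i : Fin D1, ∑ j : Fin D1, ∑ k : Fin D2, ∑ l : Fin D2,
      ∑ a : Fin D1 × Fin D2, ∑ b : Fin D1 × Fin D2,
        (f a (i,k) * star (f a (i,k)) * (g b (j,l) * star (g b (j,l)))
         - f a (i,k) * star (f a (j,k)) * (g b (j,l) * star (g b (i,l)))
         - f a (i,k) * star (f a (i,l)) * (g b (j,l) * star (g b (j,k)))
         + f a (i,k) * star (f a (j,l)) * (g b (j,l) * star (g b (i,k)))))
      = ∑ b : Fin D1 × Fin D2, ∑ a : Fin D1 × Fin D2,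
        ∑ i : Fin D1, ∑ j : Fin D1, ∑ k : Fin D2, ∑ l : Fin D2,
        (f a (i,k) * star (f a (i,k)) * (g b (j,l) * star (g b (j,l)))
         - f a (i,k) * star (f a (j,k)) * (g b (j,l) * star (g b (i,l)))
         - f a (i,k) * star (f a (i,l)) * (g b (j,l) * star (g b (j,k)))
         + f a (i,k) * star (f a (j,l)) * (g b (j,l) * star (g b (i,k)))) := by
    rw [pull5 (fun i j k l a b =>
      (f a (i,k) * star (f a (i,k)) * (g b (j,l) * star (g b (j,l)))
       - f a (i,k) * star (f a (j,k)) * (g b (j,l) * star (g b (i,l)))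
       - f a (i,k) * star (f a (i,l)) * (g b (j,l) * star (g b (j,k)))
       + f a (i,k) * star (f a (j,l)) * (g b (j,l) * star (g b (i,k)))))]
    refine Finset.sum_congr rfl fun b _ => ?_
    rw [pull4 (fun i j k l a =>
      (f a (i,k) * star (f a (i,k)) * (g b (j,l) * star (g b (j,l)))
       - f a (i,k) * star (f a (j,k)) * (g b (j,l) * star (g b (i,l)))
       - f a (i,k) * star (f a (i,l)) * (g b (j,l) * star (g b (j,k)))
       + f a (i,k) * star (f a (j,l)) * (g b (j,l) * star (g b (i,k)))))]
  rw [step1, step2]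
  exact Finset.sum_nonneg fun b _ => Finset.sum_nonneg fun a _ => key_nonneg (f a) (g b)
end

section
/- For an AME state on 4 qubits (a pure state on (C^2)^{⊗4} all of whose 2-party reductions are maximally mixed), the alternating sum S_0 = Σ_{k=0}^4 (−1)^k C(4,k) 2^{−min(k,4−k)} evaluates to −1/2; since the shadow inequality requires S_0 ≥ 0, no AME state on 4 qubits exists. -/
open Matrix BigOperators

/-- Merge a configuration on a subset `S` with one on its complement into a full
configuration. -/
def mergeFn {n D : ℕ} (S : Finset (Fin n)) (a : {i // i ∈ S} → Fin D)
    (c : {i // i ∉ S} → Fin D) : Fin n → Fin D :=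
  fun i => if h : i ∈ S then a ⟨i, h⟩ else c ⟨i, h⟩

/-- Reduced (traced-down) matrix of `ρ` on the subsystem labelled by `S`. -/
noncomputable def reduceTo {n D : ℕ} (S : Finset (Fin n))
    (ρ : Matrix (Fin n → Fin D) (Fin n → Fin D) ℂ) :
    Matrix ({i // i ∈ S} → Fin D) ({i // i ∈ S} → Fin D) ℂ :=
  Matrix.of fun a b => ∑ c : {i // i ∉ S} → Fin D, ρ (mergeFn S a c) (mergeFn S b c)

namespace AME4

abbrev Cfg := Fin 4 → Fin 2

def dd {D : ℕ} (a b : Fin D) : ℂ := if a = b then 1 else 0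

lemma dd_comm {D : ℕ} (a b : Fin D) : dd a b = dd b a := by simp [dd, eq_comm]

lemma dd_sum (a b : Fin 2) : ∑ t : Fin 2, dd a t * dd b t = dd a b := by
  fin_cases a <;> fin_cases b <;> simp [dd, Fin.sum_univ_two]

lemma prod_dd_fn {α : Type*} [Fintype α] [DecidableEq (α → Fin 2)] (f g : α → Fin 2) :
    (∏ i, dd (f i) (g i)) = if f = g then 1 else 0 := by
  by_cases h : f = g
  · subst h; simp [dd]
  · rw [if_neg h]
    obtain ⟨i, hi⟩ := Function.ne_iff.mp h
    exact Finset.prod_eq_zero (Finset.mem_univ i) (by simp [dd, hi])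

lemma sum_merge {n D : ℕ} (S : Finset (Fin n)) (f : (Fin n → Fin D) → ℂ) :
    ∑ x : Fin n → Fin D, f x
      = ∑ a : {i // i ∈ S} → Fin D, ∑ c : {i // i ∉ S} → Fin D, f (mergeFn S a c) := by
  calc ∑ x : Fin n → Fin D, f x
      = ∑ p : ({i // i ∈ S} → Fin D) × ({i // i ∉ S} → Fin D),
          f ((Equiv.piEquivPiSubtypeProd (fun i => i ∈ S) (fun _ => Fin D)).symm p) :=
        (Equiv.sum_comp _ f).symm
    _ = ∑ a : {i // i ∈ S} → Fin D, ∑ c : {i // i ∉ S} → Fin D,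
          f ((Equiv.piEquivPiSubtypeProd (fun i => i ∈ S) (fun _ => Fin D)).symm (a, c)) :=
        Fintype.sum_prod_type _
    _ = ∑ a : {i // i ∈ S} → Fin D, ∑ c : {i // i ∉ S} → Fin D, f (mergeFn S a c) := by
        rfl

lemma mergeFn_mem {n D : ℕ} {S : Finset (Fin n)} (a : {i // i ∈ S} → Fin D)
    (c : {i // i ∉ S} → Fin D) {i : Fin n} (h : i ∈ S) :
    mergeFn S a c i = a ⟨i, h⟩ := dif_pos h

lemma mergeFn_not_mem {n D : ℕ} {S : Finset (Fin n)} (a : {i // i ∈ S} → Fin D)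
    (c : {i // i ∉ S} → Fin D) {i : Fin n} (h : i ∉ S) :
    mergeFn S a c i = c ⟨i, h⟩ := dif_neg h

lemma prod_split {n : ℕ} (S : Finset (Fin n)) (f g : Fin n → ℂ) :
    (∏ i, if i ∈ S then f i else g i)
      = (∏ i : {i // i ∈ S}, f i) * ∏ i : {i // i ∉ S}, g i := by
  rw [Finset.prod_ite]
  congr 1
  · exact Finset.prod_subtype _ (by simp) f
  · exact Finset.prod_subtype _ (by simp) g


noncomputable def rho (ψ : Cfg → ℂ) : Matrix Cfg Cfg ℂ :=
  Matrix.of fun x y => ψ x * (starRingEnd ℂ) (ψ y)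

noncomputable def Tt (S : Finset (Fin 4)) (ψ : Cfg → ℂ) : ℂ :=
  ∑ x : Cfg, ∑ y : Cfg, ∑ z : Cfg, ∑ w : Cfg,
    ψ x * (starRingEnd ℂ) (ψ y) * ψ z * (starRingEnd ℂ) (ψ w) *
      ∏ i, (if i ∈ S then dd (x i) (w i) * dd (y i) (z i)
             else dd (x i) (y i) * dd (z i) (w i))

lemma hprod (S : Finset (Fin 4)) (x1 y1 z1 w1 : {i // i ∈ S} → Fin 2)
    (x2 y2 z2 w2 : {i // i ∉ S} → Fin 2) :
    (∏ i, (if i ∈ S then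
        dd (mergeFn S x1 x2 i) (mergeFn S w1 w2 i) * dd (mergeFn S y1 y2 i) (mergeFn S z1 z2 i)
      else
        dd (mergeFn S x1 x2 i) (mergeFn S y1 y2 i) * dd (mergeFn S z1 z2 i) (mergeFn S w1 w2 i)))
    = (if x1 = w1 then 1 else 0) * (if y1 = z1 then 1 else 0) *
      ((if x2 = y2 then 1 else 0) * (if z2 = w2 then 1 else 0)) := by
  rw [prod_split]
  congr 1
  · have : ∀ k : {i // i ∈ S},
        dd (mergeFn S x1 x2 k.1) (mergeFn S w1 w2 k.1) * dd (mergeFn S y1 y2 k.1) (mergeFn S z1 z2 k.1)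
        = dd (x1 k) (w1 k) * dd (y1 k) (z1 k) := by
      intro k; rw [mergeFn_mem _ _ k.2, mergeFn_mem _ _ k.2, mergeFn_mem _ _ k.2,
        mergeFn_mem _ _ k.2]
    rw [Finset.prod_congr rfl (fun k _ => this k), Finset.prod_mul_distrib,
      prod_dd_fn, prod_dd_fn]
  · have : ∀ k : {i // i ∉ S},
        dd (mergeFn S x1 x2 k.1) (mergeFn S y1 y2 k.1) * dd (mergeFn S z1 z2 k.1) (mergeFn S w1 w2 k.1)
        = dd (x2 k) (y2 k) * dd (z2 k) (w2 k) := by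
      intro k; rw [mergeFn_not_mem _ _ k.2, mergeFn_not_mem _ _ k.2, mergeFn_not_mem _ _ k.2,
        mergeFn_not_mem _ _ k.2]
    rw [Finset.prod_congr rfl (fun k _ => this k), Finset.prod_mul_distrib,
      prod_dd_fn, prod_dd_fn]

lemma Tt_eq_trace (S : Finset (Fin 4)) (ψ : Cfg → ℂ) :
    Tt S ψ = ∑ a : {i // i ∈ S} → Fin 2, ∑ b : {i // i ∈ S} → Fin 2,
      reduceTo S (rho ψ) a b * reduceTo S (rho ψ) b a := by
  have rhs : ∀ a b : {i // i ∈ S} → Fin 2,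
      reduceTo S (rho ψ) a b * reduceTo S (rho ψ) b a
      = ∑ c : {i // i ∉ S} → Fin 2, ∑ d : {i // i ∉ S} → Fin 2,
          ψ (mergeFn S a c) * (starRingEnd ℂ) (ψ (mergeFn S b c))
          * (ψ (mergeFn S b d) * (starRingEnd ℂ) (ψ (mergeFn S a d))) := by
    intro a b
    simp only [reduceTo, rho, Matrix.of_apply]
    rw [Finset.sum_mul_sum]
  simp only [rhs]
  -- swap b-sum and c-sum on the RHS
  have rhs2 : (∑ a : {i // i ∈ S} → Fin 2, ∑ b : {i // i ∈ S} → Fin 2,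
      ∑ c : {i // i ∉ S} → Fin 2, ∑ d : {i // i ∉ S} → Fin 2,
          ψ (mergeFn S a c) * (starRingEnd ℂ) (ψ (mergeFn S b c))
          * (ψ (mergeFn S b d) * (starRingEnd ℂ) (ψ (mergeFn S a d))))
      = ∑ a : {i // i ∈ S} → Fin 2, ∑ c : {i // i ∉ S} → Fin 2,
        ∑ b : {i // i ∈ S} → Fin 2, ∑ d : {i // i ∉ S} → Fin 2,
          ψ (mergeFn S a c) * (starRingEnd ℂ) (ψ (mergeFn S b c))
          * (ψ (mergeFn S b d) * (starRingEnd ℂ) (ψ (mergeFn S a d))) := by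
    exact Finset.sum_congr rfl (fun a _ => Finset.sum_comm)
  rw [rhs2]
  unfold Tt
  simp only [sum_merge S]
  apply Finset.sum_congr rfl; intro x1 _
  apply Finset.sum_congr rfl; intro x2 _
  -- goal: ∑ y1 ∑ y2 ∑ z1 ∑ z2 ∑ w1 ∑ w2 ... = ∑ b ∑ d ...
  apply Finset.sum_congr rfl; intro y1 _
  rw [Fintype.sum_eq_single x2 ?h1]
  case h1 =>
    intro y2 hy2
    apply Finset.sum_eq_zero; intro z1 _
    apply Finset.sum_eq_zero; intro z2 _
    apply Finset.sum_eq_zero; intro w1 _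
    apply Finset.sum_eq_zero; intro w2 _
    rw [hprod]
    simp [Ne.symm hy2]
  rw [Fintype.sum_eq_single y1 ?h2]
  case h2 =>
    intro z1 hz1
    apply Finset.sum_eq_zero; intro z2 _
    apply Finset.sum_eq_zero; intro w1 _
    apply Finset.sum_eq_zero; intro w2 _
    rw [hprod]
    simp [Ne.symm hz1]
  apply Finset.sum_congr rfl; intro z2 _
  rw [Fintype.sum_eq_single x1 ?h3]
  case h3 =>
    intro w1 hw1
    apply Finset.sum_eq_zero; intro w2 _
    rw [hprod]
    simp [Ne.symm hw1]
  rw [Fintype.sum_eq_single z2 ?h4]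
  case h4 =>
    intro w2 hw2
    rw [hprod]
    simp [Ne.symm hw2]
  rw [hprod]
  simp only [if_pos rfl]
  norm_num
  ring


lemma sum_normSq (ψ : Cfg → ℂ) (h1 : ∑ x, Complex.normSq (ψ x) = 1) :
    (∑ x : Cfg, ψ x * (starRingEnd ℂ) (ψ x)) = 1 := by
  simp only [Complex.mul_conj]
  rw [← Complex.ofReal_sum, h1, Complex.ofReal_one]

lemma Tt_two (ψ : Cfg → ℂ) (S : Finset (Fin 4)) (hS : S.card = 2)
    (h2 : reduceTo S (rho ψ) = ((1 : ℂ) / 4) • 1) : Tt S ψ = 1 / 4 := by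
  rw [Tt_eq_trace, h2]
  have key : ∀ a b : {i // i ∈ S} → Fin 2,
      (((1 : ℂ) / 4) • (1 : Matrix ({i // i ∈ S} → Fin 2) ({i // i ∈ S} → Fin 2) ℂ)) a b *
        (((1 : ℂ) / 4) • (1 : Matrix ({i // i ∈ S} → Fin 2) ({i // i ∈ S} → Fin 2) ℂ)) b a
      = if a = b then 1 / 16 else 0 := by
    intro a b
    by_cases h : a = b
    · subst h; simp [Matrix.smul_apply, Matrix.one_apply]; norm_num
    · simp [Matrix.smul_apply, Matrix.one_apply, h, Ne.symm h]
  simp only [key, Finset.sum_ite_eq, Finset.mem_univ, if_true]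
  rw [Finset.sum_const, Finset.card_univ]
  have hc : Fintype.card ({i // i ∈ S} → Fin 2) = 4 := by
    rw [Fintype.card_fun, Fintype.card_coe, hS, Fintype.card_fin]
    norm_num
  rw [hc]
  norm_num

lemma Tt_empty (ψ : Cfg → ℂ) (h1 : ∑ x, Complex.normSq (ψ x) = 1) : Tt ∅ ψ = 1 := by
  unfold Tt
  have hp : ∀ x y z w : Cfg,
      (∏ i, (if i ∈ (∅ : Finset (Fin 4)) then dd (x i) (w i) * dd (y i) (z i)
        else dd (x i) (y i) * dd (z i) (w i)))
      = (if x = y then 1 else 0) * (if z = w then 1 else 0) := by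
    intro x y z w
    simp only [Finset.notMem_empty, if_false]
    rw [Finset.prod_mul_distrib, prod_dd_fn, prod_dd_fn]
  simp only [hp]
  have e1 : ∀ x : Cfg,
      (∑ y : Cfg, ∑ z : Cfg, ∑ w : Cfg, ψ x * (starRingEnd ℂ) (ψ y) * ψ z * (starRingEnd ℂ) (ψ w)
          * ((if x = y then 1 else 0) * (if z = w then 1 else 0)))
      = ∑ z : Cfg, (ψ x * (starRingEnd ℂ) (ψ x)) * (ψ z * (starRingEnd ℂ) (ψ z)) := by
    intro x
    rw [Fintype.sum_eq_single x ?hy]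
    case hy =>
      intro y hy
      apply Finset.sum_eq_zero; intro z _
      apply Finset.sum_eq_zero; intro w _
      simp [Ne.symm hy]
    apply Finset.sum_congr rfl; intro z _
    rw [Fintype.sum_eq_single z ?hw]
    case hw =>
      intro w hw
      simp [Ne.symm hw]
    simp only [if_pos rfl]
    norm_num
    ring
  simp only [e1]
  rw [← Finset.sum_mul_sum, sum_normSq ψ h1, one_mul]

lemma Tt_univ (ψ : Cfg → ℂ) (h1 : ∑ x, Complex.normSq (ψ x) = 1) :
    Tt Finset.univ ψ = 1 := by
  unfold Tt
  have hp : ∀ x y z w : Cfg,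
      (∏ i, (if i ∈ (Finset.univ : Finset (Fin 4)) then dd (x i) (w i) * dd (y i) (z i)
        else dd (x i) (y i) * dd (z i) (w i)))
      = (if x = w then 1 else 0) * (if y = z then 1 else 0) := by
    intro x y z w
    simp only [Finset.mem_univ, if_true]
    rw [Finset.prod_mul_distrib, prod_dd_fn, prod_dd_fn]
  simp only [hp]
  have e1 : ∀ x : Cfg,
      (∑ y : Cfg, ∑ z : Cfg, ∑ w : Cfg, ψ x * (starRingEnd ℂ) (ψ y) * ψ z * (starRingEnd ℂ) (ψ w)
          * ((if x = w then 1 else 0) * (if y = z then 1 else 0)))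
      = ∑ y : Cfg, (ψ x * (starRingEnd ℂ) (ψ x)) * (ψ y * (starRingEnd ℂ) (ψ y)) := by
    intro x
    apply Finset.sum_congr rfl; intro y _
    rw [Fintype.sum_eq_single y ?hz]
    case hz =>
      intro z hz
      apply Finset.sum_eq_zero; intro w _
      simp [Ne.symm hz]
    rw [Fintype.sum_eq_single x ?hw]
    case hw =>
      intro w hw
      simp [Ne.symm hw]
    simp only [if_pos rfl]
    norm_num
    ring
  simp only [e1]
  rw [← Finset.sum_mul_sum, sum_normSq ψ h1, one_mul]

lemma Tt_compl (S : Finset (Fin 4)) (ψ : Cfg → ℂ) : Tt Sᶜ ψ = Tt S ψ := by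
  unfold Tt
  apply Finset.sum_congr rfl; intro x _
  have swap : ∀ F : Cfg → Cfg → Cfg → ℂ,
      (∑ y : Cfg, ∑ z : Cfg, ∑ w : Cfg, F y z w)
        = ∑ y : Cfg, ∑ z : Cfg, ∑ w : Cfg, F w z y := by
    intro F
    calc (∑ y : Cfg, ∑ z : Cfg, ∑ w : Cfg, F y z w)
        = ∑ y : Cfg, ∑ w : Cfg, ∑ z : Cfg, F y z w :=
          Finset.sum_congr rfl (fun y _ => Finset.sum_comm)
      _ = ∑ w : Cfg, ∑ y : Cfg, ∑ z : Cfg, F y z w := Finset.sum_comm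
      _ = ∑ w : Cfg, ∑ z : Cfg, ∑ y : Cfg, F y z w :=
          Finset.sum_congr rfl (fun w _ => Finset.sum_comm)
  rw [swap (fun y z w => ψ x * (starRingEnd ℂ) (ψ y) * ψ z * (starRingEnd ℂ) (ψ w) *
      ∏ i, (if i ∈ Sᶜ then dd (x i) (w i) * dd (y i) (z i)
        else dd (x i) (y i) * dd (z i) (w i)))]
  apply Finset.sum_congr rfl; intro y _
  apply Finset.sum_congr rfl; intro z _
  apply Finset.sum_congr rfl; intro w _
  have hprod2 : (∏ i, (if i ∈ Sᶜ then dd (x i) (y i) * dd (w i) (z i)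
        else dd (x i) (w i) * dd (z i) (y i)))
      = ∏ i, (if i ∈ S then dd (x i) (w i) * dd (y i) (z i)
        else dd (x i) (y i) * dd (z i) (w i)) := by
    apply Finset.prod_congr rfl
    intro i _
    by_cases h : i ∈ S
    · rw [if_neg (by simp [h]), if_pos h, dd_comm (z i) (y i)]
    · rw [if_pos (by simp [h]), if_neg h, dd_comm (w i) (z i)]
  rw [hprod2]
  ring


noncomputable def Ent (S : Finset (Fin 4)) (ψ : Cfg → ℂ) (u v : Cfg) : ℂ :=
  ∑ x : Cfg, ∑ y : Cfg, ψ x * (starRingEnd ℂ) (ψ y) *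
    ∏ i, (if i ∈ S then dd (x i) (u i) * dd (y i) (v i) else dd (x i) (y i))

lemma Ent_eq (S : Finset (Fin 4)) (ψ : Cfg → ℂ) (u v : Cfg) :
    Ent S ψ u v = reduceTo S (rho ψ) (fun k => u k.1) (fun k => v k.1) := by
  have hprodE : ∀ (x1 y1 : {i // i ∈ S} → Fin 2) (x2 y2 : {i // i ∉ S} → Fin 2),
      (∏ i, (if i ∈ S then
          dd (mergeFn S x1 x2 i) (u i) * dd (mergeFn S y1 y2 i) (v i)
        else dd (mergeFn S x1 x2 i) (mergeFn S y1 y2 i)))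
      = (if x1 = (fun k => u k.1) then 1 else 0) * (if y1 = (fun k => v k.1) then 1 else 0) *
        (if x2 = y2 then 1 else 0) := by
    intro x1 y1 x2 y2
    rw [prod_split]
    have e1 : ∀ k : {i // i ∈ S},
        dd (mergeFn S x1 x2 k.1) (u k.1) * dd (mergeFn S y1 y2 k.1) (v k.1)
        = dd (x1 k) (u k.1) * dd (y1 k) (v k.1) := by
      intro k; rw [mergeFn_mem _ _ k.2, mergeFn_mem _ _ k.2]
    have e2 : ∀ k : {i // i ∉ S},
        dd (mergeFn S x1 x2 k.1) (mergeFn S y1 y2 k.1) = dd (x2 k) (y2 k) := by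
      intro k; rw [mergeFn_not_mem _ _ k.2, mergeFn_not_mem _ _ k.2]
    rw [Finset.prod_congr rfl (fun k _ => e1 k), Finset.prod_congr rfl (fun k _ => e2 k),
      Finset.prod_mul_distrib, prod_dd_fn, prod_dd_fn, prod_dd_fn]
  unfold Ent
  simp only [sum_merge S]
  simp only [hprodE]
  rw [Fintype.sum_eq_single (fun k : {i // i ∈ S} => u k.1) ?hx1]
  case hx1 =>
    intro x1 hx1
    apply Finset.sum_eq_zero; intro x2 _
    apply Finset.sum_eq_zero; intro y1 _
    apply Finset.sum_eq_zero; intro y2 _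
    simp [hx1]
  have inner : ∀ x2 : {i // i ∉ S} → Fin 2,
      (∑ y1 : {i // i ∈ S} → Fin 2, ∑ y2 : {i // i ∉ S} → Fin 2,
        ψ (mergeFn S (fun k => u k.1) x2) * (starRingEnd ℂ) (ψ (mergeFn S y1 y2)) *
          ((if (fun k : {i // i ∈ S} => u k.1) = (fun k => u k.1) then 1 else 0) *
            (if y1 = (fun k => v k.1) then 1 else 0) * (if x2 = y2 then 1 else 0)))
      = ψ (mergeFn S (fun k => u k.1) x2) *
          (starRingEnd ℂ) (ψ (mergeFn S (fun k => v k.1) x2)) := by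
    intro x2
    rw [Fintype.sum_eq_single (fun k : {i // i ∈ S} => v k.1) ?hy1]
    case hy1 =>
      intro y1 hy1
      apply Finset.sum_eq_zero; intro y2 _
      simp [hy1]
    rw [Fintype.sum_eq_single x2 ?hy2]
    case hy2 =>
      intro y2 hy2
      simp [Ne.symm hy2]
    simp
  rw [Finset.sum_congr rfl (fun x2 _ => inner x2)]
  simp [reduceTo, rho]

lemma Ent_two_val (ψ : Cfg → ℂ)
    (h2 : ∀ S : Finset (Fin 4), S.card = 2 → reduceTo S (rho ψ) = ((1 : ℂ) / 4) • 1)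
    (S : Finset (Fin 4)) (hS : S.card = 2) (u v : Cfg) :
    Ent S ψ u v = if (∀ i ∈ S, u i = v i) then 1 / 4 else 0 := by
  rw [Ent_eq, h2 S hS]
  by_cases h : ∀ i ∈ S, u i = v i
  · have hfun : (fun k : {i // i ∈ S} => u k.1) = (fun k => v k.1) :=
      funext fun k => h k.1 k.2
    rw [if_pos h]
    simp [Matrix.smul_apply, Matrix.one_apply, hfun]
  · have hfun : (fun k : {i // i ∈ S} => u k.1) ≠ (fun k => v k.1) := by
      intro hc
      exact h fun i hi => congrFun hc ⟨i, hi⟩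
    rw [if_neg h]
    simp [Matrix.smul_apply, Matrix.one_apply, hfun]

lemma Ent_single (ψ : Cfg → ℂ)
    (h2 : ∀ S : Finset (Fin 4), S.card = 2 → reduceTo S (rho ψ) = ((1 : ℂ) / 4) • 1)
    (i j : Fin 4) (hij : i ≠ j) (u v : Cfg) :
    Ent ({i} : Finset (Fin 4)) ψ u v = if u i = v i then 1 / 2 else 0 := by
  have hcard : ({i, j} : Finset (Fin 4)).card = 2 := by
    rw [Finset.card_insert_of_notMem (by simp [hij]), Finset.card_singleton]
  have stepA : Ent ({i} : Finset (Fin 4)) ψ u v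
      = ∑ t : Fin 2, Ent ({i, j} : Finset (Fin 4)) ψ
          (Function.update u j t) (Function.update v j t) := by
    unfold Ent
    conv_rhs => rw [Finset.sum_comm]
    apply Finset.sum_congr rfl; intro x _
    conv_rhs => rw [Finset.sum_comm]
    apply Finset.sum_congr rfl; intro y _
    rw [← Finset.mul_sum]
    congr 1
    have hLHS : (∏ k, (if k ∈ ({i} : Finset (Fin 4)) then dd (x k) (u k) * dd (y k) (v k)
          else dd (x k) (y k)))
        = dd (x j) (y j) * ∏ k ∈ Finset.univ.erase j,
            (if k ∈ ({i} : Finset (Fin 4)) then dd (x k) (u k) * dd (y k) (v k)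
              else dd (x k) (y k)) := by
      rw [← Finset.mul_prod_erase Finset.univ _ (Finset.mem_univ j)]
      rw [if_neg (by simp [Ne.symm hij])]
    have hRHS : ∀ t : Fin 2, (∏ k, (if k ∈ ({i, j} : Finset (Fin 4)) then
            dd (x k) (Function.update u j t k) * dd (y k) (Function.update v j t k)
          else dd (x k) (y k)))
        = (dd (x j) t * dd (y j) t) * ∏ k ∈ Finset.univ.erase j,
            (if k ∈ ({i} : Finset (Fin 4)) then dd (x k) (u k) * dd (y k) (v k)
              else dd (x k) (y k)) := by
      intro t
      rw [← Finset.mul_prod_erase Finset.univ _ (Finset.mem_univ j)]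
      congr 1
      · rw [if_pos (by simp), Function.update_self, Function.update_self]
      · apply Finset.prod_congr rfl
        intro k hk
        have hkj : k ≠ j := Finset.ne_of_mem_erase hk
        simp only [Finset.mem_insert, Finset.mem_singleton, hkj, or_false,
          Function.update_of_ne hkj]
    rw [hLHS]
    rw [Finset.sum_congr rfl (fun t _ => hRHS t), ← Finset.sum_mul, dd_sum]
  rw [stepA]
  have stepB : ∀ t : Fin 2,
      Ent ({i, j} : Finset (Fin 4)) ψ (Function.update u j t) (Function.update v j t)
      = if u i = v i then 1 / 4 else 0 := by
    intro t
    rw [Ent_two_val ψ h2 _ hcard]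
    have hiff : (∀ k ∈ ({i, j} : Finset (Fin 4)),
        Function.update u j t k = Function.update v j t k) ↔ (u i = v i) := by
      constructor
      · intro h
        have hi := h i (by simp)
        rwa [Function.update_of_ne hij, Function.update_of_ne hij] at hi
      · intro h k hk
        rcases Finset.mem_insert.mp hk with rfl | hk
        · rwa [Function.update_of_ne hij, Function.update_of_ne hij]
        · rw [Finset.mem_singleton.mp hk, Function.update_self, Function.update_self]
    simp only [hiff]
  rw [Finset.sum_congr rfl (fun t _ => stepB t)]
  by_cases h : u i = v i <;> simp [h, Fin.sum_univ_two] <;> norm_num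


lemma red_single (ψ : Cfg → ℂ)
    (h2 : ∀ S : Finset (Fin 4), S.card = 2 → reduceTo S (rho ψ) = ((1 : ℂ) / 4) • 1)
    (i : Fin 4) : reduceTo ({i} : Finset (Fin 4)) (rho ψ) = ((1 : ℂ) / 2) • 1 := by
  obtain ⟨j, hij⟩ : ∃ j : Fin 4, i ≠ j := by
    by_cases h0 : i = 0
    · exact ⟨1, by rw [h0]; decide⟩
    · exact ⟨0, h0⟩
  ext a b
  have hmemi : i ∈ ({i} : Finset (Fin 4)) := Finset.mem_singleton_self i
  set u : Cfg := fun _ => a ⟨i, hmemi⟩ with hu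
  set v : Cfg := fun _ => b ⟨i, hmemi⟩ with hv
  have hau : (fun k : {k // k ∈ ({i} : Finset (Fin 4))} => u k.1) = a :=
    funext fun k => (congrArg a (Subtype.ext (Finset.mem_singleton.mp k.2))).symm
  have hbv : (fun k : {k // k ∈ ({i} : Finset (Fin 4))} => v k.1) = b :=
    funext fun k => (congrArg b (Subtype.ext (Finset.mem_singleton.mp k.2))).symm
  have key := Ent_single ψ h2 i j hij u v
  rw [Ent_eq, hau, hbv] at key
  rw [key]
  have hcond : (u i = v i) ↔ (a = b) := by
    constructor
    · intro h
      funext k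
      have hk : k = ⟨i, hmemi⟩ := Subtype.ext (Finset.mem_singleton.mp k.2)
      rw [hk]; exact h
    · intro h; rw [hu, hv, h]
  by_cases hab : a = b
  · rw [if_pos (hcond.mpr hab), hab]
    simp [Matrix.smul_apply, Matrix.one_apply]
  · rw [if_neg (fun hc => hab (hcond.mp hc))]
    simp [Matrix.smul_apply, Matrix.one_apply, hab]

lemma Tt_one (ψ : Cfg → ℂ)
    (h2 : ∀ S : Finset (Fin 4), S.card = 2 → reduceTo S (rho ψ) = ((1 : ℂ) / 4) • 1)
    (i : Fin 4) : Tt ({i} : Finset (Fin 4)) ψ = 1 / 2 := by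
  rw [Tt_eq_trace, red_single ψ h2 i]
  have key : ∀ a b : {k // k ∈ ({i} : Finset (Fin 4))} → Fin 2,
      (((1 : ℂ) / 2) • (1 : Matrix ({k // k ∈ ({i} : Finset (Fin 4))} → Fin 2)
          ({k // k ∈ ({i} : Finset (Fin 4))} → Fin 2) ℂ)) a b *
        (((1 : ℂ) / 2) • (1 : Matrix ({k // k ∈ ({i} : Finset (Fin 4))} → Fin 2)
          ({k // k ∈ ({i} : Finset (Fin 4))} → Fin 2) ℂ)) b a
      = if a = b then 1 / 4 else 0 := by
    intro a b
    by_cases h : a = b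
    · subst h; simp [Matrix.smul_apply, Matrix.one_apply]; norm_num
    · simp [Matrix.smul_apply, Matrix.one_apply, h, Ne.symm h]
  simp only [key, Finset.sum_ite_eq, Finset.mem_univ, if_true]
  rw [Finset.sum_const, Finset.card_univ]
  have hc : Fintype.card ({k // k ∈ ({i} : Finset (Fin 4))} → Fin 2) = 2 := by
    rw [Fintype.card_fun, Fintype.card_coe, Finset.card_singleton, Fintype.card_fin]
    norm_num
  rw [hc]
  norm_num


def eps (a b : Fin 2) : ℂ := if a = b then 0 else if a = 0 then 1 else -1

lemma eps_mul (a c b d : Fin 2) :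
    eps a c * eps b d = dd a b * dd c d - dd a d * dd b c := by
  fin_cases a <;> fin_cases b <;> fin_cases c <;> fin_cases d <;> norm_num [eps, dd]

lemma eps_conj (a b : Fin 2) : (starRingEnd ℂ) (eps a b) = eps a b := by
  fin_cases a <;> fin_cases b <;> simp [eps]

noncomputable def P (ψ : Cfg → ℂ) : ℂ :=
  ∑ x : Cfg, ∑ y : Cfg, ∑ z : Cfg, ∑ w : Cfg,
    ψ x * (starRingEnd ℂ) (ψ y) * ψ z * (starRingEnd ℂ) (ψ w) *
      ∏ i, (eps (x i) (z i) * eps (y i) (w i))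

noncomputable def Fq (ψ : Cfg → ℂ) : ℂ :=
  ∑ x : Cfg, ∑ z : Cfg, ψ x * ψ z * ∏ i, eps (x i) (z i)

lemma P_eq_sum (ψ : Cfg → ℂ) :
    P ψ = ∑ t ∈ (Finset.univ : Finset (Fin 4)).powerset, (-1 : ℂ) ^ t.card * Tt t ψ := by
  have hker : ∀ x y z w : Cfg, (∏ i, (eps (x i) (z i) * eps (y i) (w i)))
      = ∑ t ∈ (Finset.univ : Finset (Fin 4)).powerset, (-1 : ℂ) ^ t.card *
          ∏ i, (if i ∈ t then dd (x i) (w i) * dd (y i) (z i)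
            else dd (x i) (y i) * dd (z i) (w i)) := by
    intro x y z w
    have e1 : ∀ i : Fin 4, eps (x i) (z i) * eps (y i) (w i)
        = (-(dd (x i) (w i) * dd (y i) (z i))) + dd (x i) (y i) * dd (z i) (w i) := by
      intro i; rw [eps_mul]; ring
    rw [Finset.prod_congr rfl (fun i _ => e1 i), Finset.prod_add]
    apply Finset.sum_congr rfl
    intro t ht
    have hneg : (∏ i ∈ t, -(dd (x i) (w i) * dd (y i) (z i)))
        = (-1 : ℂ) ^ t.card * ∏ i ∈ t, dd (x i) (w i) * dd (y i) (z i) := by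
      rw [Finset.prod_congr rfl (fun i _ => neg_eq_neg_one_mul (dd (x i) (w i) * dd (y i) (z i))),
        Finset.prod_mul_distrib, Finset.prod_const]
    rw [hneg, mul_assoc]
    congr 1
    rw [Finset.prod_ite]
    have hf1 : Finset.univ.filter (fun i => i ∈ t) = t := by ext k; simp
    have hf2 : Finset.univ.filter (fun i => ¬ i ∈ t) = Finset.univ \ t := by
      ext k; simp
    rw [hf1, hf2]
  unfold P
  simp only [hker, Finset.mul_sum]
  rw [Finset.sum_congr rfl (fun x _ => Finset.sum_congr rfl (fun y _ =>
    Finset.sum_congr rfl (fun z _ => Finset.sum_comm)))]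
  rw [Finset.sum_congr rfl (fun x _ => Finset.sum_congr rfl (fun y _ => Finset.sum_comm))]
  rw [Finset.sum_congr rfl (fun x _ => Finset.sum_comm)]
  rw [Finset.sum_comm]
  apply Finset.sum_congr rfl
  intro t ht
  unfold Tt
  simp only [Finset.mul_sum]
  apply Finset.sum_congr rfl; intro x _
  apply Finset.sum_congr rfl; intro y _
  apply Finset.sum_congr rfl; intro z _
  apply Finset.sum_congr rfl; intro w _
  ring

lemma P_factor (ψ : Cfg → ℂ) : P ψ = Fq ψ * (starRingEnd ℂ) (Fq ψ) := by
  unfold P Fq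
  simp only [map_sum, _root_.map_mul, map_prod, eps_conj]
  rw [Finset.sum_mul_sum]
  apply Finset.sum_congr rfl; intro x _
  apply Finset.sum_congr rfl; intro y _
  rw [Finset.sum_mul_sum]
  apply Finset.sum_congr rfl; intro z _
  apply Finset.sum_congr rfl; intro w _
  rw [Finset.prod_mul_distrib]
  ring

noncomputable def vv : ℕ → ℂ
  | 0 => 1
  | 1 => -(1 / 2)
  | 2 => 1 / 4
  | 3 => -(1 / 2)
  | 4 => 1
  | _ => 0

lemma Tt_val (ψ : Cfg → ℂ) (h1 : ∑ x, Complex.normSq (ψ x) = 1)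
    (h2 : ∀ S : Finset (Fin 4), S.card = 2 → reduceTo S (rho ψ) = ((1 : ℂ) / 4) • 1)
    (t : Finset (Fin 4)) : (-1 : ℂ) ^ t.card * Tt t ψ = vv t.card := by
  have hle : t.card ≤ 4 := by
    have := Finset.card_le_univ t
    simpa using this
  have hcases : t.card = 0 ∨ t.card = 1 ∨ t.card = 2 ∨ t.card = 3 ∨ t.card = 4 := by omega
  rcases hcases with h | h | h | h | h <;> rw [h]
  · rw [Finset.card_eq_zero.mp h, Tt_empty ψ h1]; norm_num [vv]
  · obtain ⟨i, rfl⟩ := Finset.card_eq_one.mp h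
    rw [Tt_one ψ h2 i]; norm_num [vv]
  · rw [Tt_two ψ t h (h2 t h)]; norm_num [vv]
  · have hc : tᶜ.card = 1 := by rw [Finset.card_compl]; simp [h]
    obtain ⟨i, hi⟩ := Finset.card_eq_one.mp hc
    rw [← Tt_compl t ψ, hi, Tt_one ψ h2 i]; norm_num [vv]
  · rw [Finset.eq_univ_of_card t (by simpa using h), Tt_univ ψ h1]; norm_num [vv]


lemma sum_vv : ∑ t ∈ (Finset.univ : Finset (Fin 4)).powerset, vv t.card = -(1 / 2) := by
  rw [Finset.sum_powerset_apply_card]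
  have h4 : (Finset.univ : Finset (Fin 4)).card = 4 := by simp
  rw [h4]
  norm_num [Finset.sum_range_succ, vv, nsmul_eq_mul, Nat.choose]

end AME4

/-- The shadow coefficient `S₀ = ∑_{k=0}^4 (−1)^k C(4,k) 2^{−min(k,4−k)}` of a
hypothetical 4-qubit AME state equals `−1/2`; since the shadow inequality requires
`S₀ ≥ 0`, no AME state on 4 qubits exists (no pure state on `(ℂ²)^{⊗4}` has all its
two-party reductions maximally mixed). -/
theorem no_four_qubit_AME :
    (∑ k ∈ Finset.range 5,
        (-1 : ℝ) ^ k * (Nat.choose 4 k : ℝ) * (2 : ℝ) ^ (-(min k (4 - k) : ℤ))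
      = -1 / 2) ∧
    ¬ ∃ ψ : (Fin 4 → Fin 2) → ℂ,
        (∑ x, Complex.normSq (ψ x) = 1) ∧
        ∀ S : Finset (Fin 4), S.card = 2 →
          reduceTo S (Matrix.of fun x y => ψ x * (starRingEnd ℂ) (ψ y))
            = ((1 : ℂ) / 4) • 1 := by
  constructor
  · norm_num [Finset.sum_range_succ, Nat.choose]
  · rintro ⟨ψ, h1, h2⟩
    have h2' : ∀ S : Finset (Fin 4), S.card = 2 →
        reduceTo S (AME4.rho ψ) = ((1 : ℂ) / 4) • 1 := fun S hS => h2 S hS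
    have hP1 : AME4.P ψ = -(1 / 2) := by
      rw [AME4.P_eq_sum,
        Finset.sum_congr rfl (fun t _ => AME4.Tt_val ψ h1 h2' t), AME4.sum_vv]
    have hP2 : AME4.P ψ = (Complex.normSq (AME4.Fq ψ) : ℂ) := by
      rw [AME4.P_factor, Complex.mul_conj]
    have hns : Complex.normSq (AME4.Fq ψ) = -(1 / 2) := by
      have h := hP2.symm.trans hP1
      have h' : ((Complex.normSq (AME4.Fq ψ) : ℝ) : ℂ) = ((-(1 / 2) : ℝ) : ℂ) := by
        rw [h]; norm_num
      exact Complex.ofReal_inj.mp h' 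
    have hnn := Complex.normSq_nonneg (AME4.Fq ψ)
    linarith
end

section
/- The state |φ_{2333}⟩ on C^2 ⊗ C^3 ⊗ C^3 ⊗ C^3, defined with coefficients ±a, ±b on the 24 listed computational basis vectors where 12(a^2+b^2) = 1 and 54ab = 1 with a,b real, is normalized and has all two-party and one-party reductions that do not exceed the dimension of their complement maximally mixed; i.e., ρ_{AB} = ρ_{AC} = ρ_{AD} = 1/6 and ρ_B = ρ_C = ρ_D = 1/3, so it is maximally entangled across every bipartition. -/
open Matrix BigOperators

/-- Coefficient table of the state `|φ₂₃₃₃⟩` (indices given as natural numbers). -/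
noncomputable def coeff2333 (a b : ℝ) : ℕ → ℕ → ℕ → ℕ → ℂ
  | 0, 0, 1, 1 => -(a : ℂ)
  | 0, 0, 1, 2 => -(b : ℂ)
  | 0, 0, 2, 1 => (b : ℂ)
  | 0, 0, 2, 2 => (a : ℂ)
  | 0, 1, 0, 1 => -(b : ℂ)
  | 0, 1, 0, 2 => (a : ℂ)
  | 0, 1, 1, 0 => (b : ℂ)
  | 0, 1, 2, 0 => (a : ℂ)
  | 0, 2, 0, 1 => -(a : ℂ)
  | 0, 2, 0, 2 => (b : ℂ)
  | 0, 2, 1, 0 => -(a : ℂ)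
  | 0, 2, 2, 0 => -(b : ℂ)
  | 1, 0, 1, 1 => -(b : ℂ)
  | 1, 0, 1, 2 => (a : ℂ)
  | 1, 0, 2, 1 => -(a : ℂ)
  | 1, 0, 2, 2 => (b : ℂ)
  | 1, 1, 0, 1 => (a : ℂ)
  | 1, 1, 0, 2 => (b : ℂ)
  | 1, 1, 1, 0 => -(a : ℂ)
  | 1, 1, 2, 0 => (b : ℂ)
  | 1, 2, 0, 1 => -(b : ℂ)
  | 1, 2, 0, 2 => -(a : ℂ)
  | 1, 2, 1, 0 => -(b : ℂ)
  | 1, 2, 2, 0 => (a : ℂ)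
  | _, _, _, _ => 0

/-- The state `|φ₂₃₃₃⟩` on `ℂ² ⊗ ℂ³ ⊗ ℂ³ ⊗ ℂ³`. -/
noncomputable def phi2333 (a b : ℝ) : Fin 2 × Fin 3 × Fin 3 × Fin 3 → ℂ :=
  fun x => coeff2333 a b x.1 x.2.1 x.2.2.1 x.2.2.2

/-- The pure density matrix of `|φ₂₃₃₃⟩`. -/
noncomputable def rho2333 (a b : ℝ) :
    Matrix (Fin 2 × Fin 3 × Fin 3 × Fin 3) (Fin 2 × Fin 3 × Fin 3 × Fin 3) ℂ :=
  Matrix.of fun x y => phi2333 a b x * (starRingEnd ℂ) (phi2333 a b y)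

/-- Reduction onto parties `A` and `B`. -/
noncomputable def rhoAB (a b : ℝ) : Matrix (Fin 2 × Fin 3) (Fin 2 × Fin 3) ℂ :=
  Matrix.of fun p q => ∑ k : Fin 3, ∑ l : Fin 3,
    rho2333 a b (p.1, p.2, k, l) (q.1, q.2, k, l)

/-- Reduction onto parties `A` and `C`. -/
noncomputable def rhoAC (a b : ℝ) : Matrix (Fin 2 × Fin 3) (Fin 2 × Fin 3) ℂ :=
  Matrix.of fun p q => ∑ k : Fin 3, ∑ l : Fin 3,
    rho2333 a b (p.1, k, p.2, l) (q.1, k, q.2, l)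

/-- Reduction onto parties `A` and `D`. -/
noncomputable def rhoAD (a b : ℝ) : Matrix (Fin 2 × Fin 3) (Fin 2 × Fin 3) ℂ :=
  Matrix.of fun p q => ∑ k : Fin 3, ∑ l : Fin 3,
    rho2333 a b (p.1, k, l, p.2) (q.1, k, l, q.2)

/-- Reduction onto party `B`. -/
noncomputable def rhoB (a b : ℝ) : Matrix (Fin 3) (Fin 3) ℂ :=
  Matrix.of fun p q => ∑ i : Fin 2, ∑ k : Fin 3, ∑ l : Fin 3,
    rho2333 a b (i, p, k, l) (i, q, k, l)

/-- Reduction onto party `C`. -/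
noncomputable def rhoC (a b : ℝ) : Matrix (Fin 3) (Fin 3) ℂ :=
  Matrix.of fun p q => ∑ i : Fin 2, ∑ k : Fin 3, ∑ l : Fin 3,
    rho2333 a b (i, k, p, l) (i, k, q, l)

/-- Reduction onto party `D`. -/
noncomputable def rhoD (a b : ℝ) : Matrix (Fin 3) (Fin 3) ℂ :=
  Matrix.of fun p q => ∑ i : Fin 2, ∑ k : Fin 3, ∑ l : Fin 3,
    rho2333 a b (i, k, l, p) (i, k, l, q)

lemma phiv0000 (a b : ℝ) : phi2333 a b (0,0,0,0) = 0 := rfl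
lemma phiv0001 (a b : ℝ) : phi2333 a b (0,0,0,1) = 0 := rfl
lemma phiv0002 (a b : ℝ) : phi2333 a b (0,0,0,2) = 0 := rfl
lemma phiv0010 (a b : ℝ) : phi2333 a b (0,0,1,0) = 0 := rfl
lemma phiv0011 (a b : ℝ) : phi2333 a b (0,0,1,1) = -(a : ℂ) := rfl
lemma phiv0012 (a b : ℝ) : phi2333 a b (0,0,1,2) = -(b : ℂ) := rfl
lemma phiv0020 (a b : ℝ) : phi2333 a b (0,0,2,0) = 0 := rfl
lemma phiv0021 (a b : ℝ) : phi2333 a b (0,0,2,1) = (b : ℂ) := rfl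
lemma phiv0022 (a b : ℝ) : phi2333 a b (0,0,2,2) = (a : ℂ) := rfl
lemma phiv0100 (a b : ℝ) : phi2333 a b (0,1,0,0) = 0 := rfl
lemma phiv0101 (a b : ℝ) : phi2333 a b (0,1,0,1) = -(b : ℂ) := rfl
lemma phiv0102 (a b : ℝ) : phi2333 a b (0,1,0,2) = (a : ℂ) := rfl
lemma phiv0110 (a b : ℝ) : phi2333 a b (0,1,1,0) = (b : ℂ) := rfl
lemma phiv0111 (a b : ℝ) : phi2333 a b (0,1,1,1) = 0 := rfl
lemma phiv0112 (a b : ℝ) : phi2333 a b (0,1,1,2) = 0 := rfl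
lemma phiv0120 (a b : ℝ) : phi2333 a b (0,1,2,0) = (a : ℂ) := rfl
lemma phiv0121 (a b : ℝ) : phi2333 a b (0,1,2,1) = 0 := rfl
lemma phiv0122 (a b : ℝ) : phi2333 a b (0,1,2,2) = 0 := rfl
lemma phiv0200 (a b : ℝ) : phi2333 a b (0,2,0,0) = 0 := rfl
lemma phiv0201 (a b : ℝ) : phi2333 a b (0,2,0,1) = -(a : ℂ) := rfl
lemma phiv0202 (a b : ℝ) : phi2333 a b (0,2,0,2) = (b : ℂ) := rfl
lemma phiv0210 (a b : ℝ) : phi2333 a b (0,2,1,0) = -(a : ℂ) := rfl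
lemma phiv0211 (a b : ℝ) : phi2333 a b (0,2,1,1) = 0 := rfl
lemma phiv0212 (a b : ℝ) : phi2333 a b (0,2,1,2) = 0 := rfl
lemma phiv0220 (a b : ℝ) : phi2333 a b (0,2,2,0) = -(b : ℂ) := rfl
lemma phiv0221 (a b : ℝ) : phi2333 a b (0,2,2,1) = 0 := rfl
lemma phiv0222 (a b : ℝ) : phi2333 a b (0,2,2,2) = 0 := rfl
lemma phiv1000 (a b : ℝ) : phi2333 a b (1,0,0,0) = 0 := rfl
lemma phiv1001 (a b : ℝ) : phi2333 a b (1,0,0,1) = 0 := rfl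
lemma phiv1002 (a b : ℝ) : phi2333 a b (1,0,0,2) = 0 := rfl
lemma phiv1010 (a b : ℝ) : phi2333 a b (1,0,1,0) = 0 := rfl
lemma phiv1011 (a b : ℝ) : phi2333 a b (1,0,1,1) = -(b : ℂ) := rfl
lemma phiv1012 (a b : ℝ) : phi2333 a b (1,0,1,2) = (a : ℂ) := rfl
lemma phiv1020 (a b : ℝ) : phi2333 a b (1,0,2,0) = 0 := rfl
lemma phiv1021 (a b : ℝ) : phi2333 a b (1,0,2,1) = -(a : ℂ) := rfl
lemma phiv1022 (a b : ℝ) : phi2333 a b (1,0,2,2) = (b : ℂ) := rfl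
lemma phiv1100 (a b : ℝ) : phi2333 a b (1,1,0,0) = 0 := rfl
lemma phiv1101 (a b : ℝ) : phi2333 a b (1,1,0,1) = (a : ℂ) := rfl
lemma phiv1102 (a b : ℝ) : phi2333 a b (1,1,0,2) = (b : ℂ) := rfl
lemma phiv1110 (a b : ℝ) : phi2333 a b (1,1,1,0) = -(a : ℂ) := rfl
lemma phiv1111 (a b : ℝ) : phi2333 a b (1,1,1,1) = 0 := rfl
lemma phiv1112 (a b : ℝ) : phi2333 a b (1,1,1,2) = 0 := rfl
lemma phiv1120 (a b : ℝ) : phi2333 a b (1,1,2,0) = (b : ℂ) := rfl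
lemma phiv1121 (a b : ℝ) : phi2333 a b (1,1,2,1) = 0 := rfl
lemma phiv1122 (a b : ℝ) : phi2333 a b (1,1,2,2) = 0 := rfl
lemma phiv1200 (a b : ℝ) : phi2333 a b (1,2,0,0) = 0 := rfl
lemma phiv1201 (a b : ℝ) : phi2333 a b (1,2,0,1) = -(b : ℂ) := rfl
lemma phiv1202 (a b : ℝ) : phi2333 a b (1,2,0,2) = -(a : ℂ) := rfl
lemma phiv1210 (a b : ℝ) : phi2333 a b (1,2,1,0) = -(b : ℂ) := rfl
lemma phiv1211 (a b : ℝ) : phi2333 a b (1,2,1,1) = 0 := rfl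
lemma phiv1212 (a b : ℝ) : phi2333 a b (1,2,1,2) = 0 := rfl
lemma phiv1220 (a b : ℝ) : phi2333 a b (1,2,2,0) = (a : ℂ) := rfl
lemma phiv1221 (a b : ℝ) : phi2333 a b (1,2,2,1) = 0 := rfl
lemma phiv1222 (a b : ℝ) : phi2333 a b (1,2,2,2) = 0 := rfl

lemma fin3_mk2 (h : 2 < 3) : (⟨2, h⟩ : Fin 3) = 2 := rfl

set_option maxHeartbeats 4000000 in
/-- The state `|φ₂₃₃₃⟩` with real coefficients `a`, `b` satisfying
`12(a²+b²) = 1` and `54ab = 1` is normalized and has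
`ρ_AB = ρ_AC = ρ_AD = 𝟙/6` and `ρ_B = ρ_C = ρ_D = 𝟙/3`, i.e. it is maximally
entangled across every bipartition. -/
theorem phi2333_is_AME (a b : ℝ)
    (h1 : 12 * (a ^ 2 + b ^ 2) = 1) (h2 : 54 * a * b = 1) :
    (∑ x, Complex.normSq (phi2333 a b x) = 1) ∧
    rhoAB a b = ((1 : ℂ) / 6) • 1 ∧
    rhoAC a b = ((1 : ℂ) / 6) • 1 ∧
    rhoAD a b = ((1 : ℂ) / 6) • 1 ∧
    rhoB a b = ((1 : ℂ) / 3) • 1 ∧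
    rhoC a b = ((1 : ℂ) / 3) • 1 ∧
    rhoD a b = ((1 : ℂ) / 3) • 1 := by
  have hr : a ^ 2 + b ^ 2 = 1 / 12 := by linarith
  have ha : (a:ℂ) ^ 2 + (b:ℂ) ^ 2 = 1 / 12 := by rw [show ((1:ℂ)/12) = ((1/12 : ℝ) : ℂ) by norm_num, ← hr]; push_cast; ring
  have hnorm : ∑ x, Complex.normSq (phi2333 a b x) = 1 := by
    simp only [Fintype.sum_prod_type, Fin.sum_univ_two, Fin.sum_univ_three,
      phiv0000, phiv0001, phiv0002, phiv0010, phiv0011, phiv0012, phiv0020, phiv0021, phiv0022, phiv0100, phiv0101, phiv0102, phiv0110, phiv0111, phiv0112, phiv0120, phiv0121, phiv0122, phiv0200, phiv0201, phiv0202, phiv0210, phiv0211, phiv0212, phiv0220, phiv0221, phiv0222, phiv1000, phiv1001, phiv1002, phiv1010, phiv1011, phiv1012, phiv1020, phiv1021, phiv1022, phiv1100, phiv1101, phiv1102, phiv1110, phiv1111, phiv1112, phiv1120, phiv1121, phiv1122, phiv1200, phiv1201, phiv1202, phiv1210, phiv1211, phiv1212, phiv1220, phiv1221, phiv1222, Complex.normSq_neg,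 Complex.normSq_ofReal, Complex.normSq_zero]
    nlinarith [hr]
  have hrhoAB : rhoAB a b = ((1 : ℂ) / 6) • 1 := by
    ext ⟨i,j⟩ ⟨k,l⟩
    fin_cases i <;> fin_cases j <;> fin_cases k <;> fin_cases l <;>
      simp only [rhoAB, rho2333, Matrix.of_apply, Fin.sum_univ_two, Fin.sum_univ_three, fin3_mk2,
      Fin.mk_zero, Fin.mk_one, phiv0000, phiv0001, phiv0002, phiv0010, phiv0011, phiv0012, phiv0020, phiv0021, phiv0022, phiv0100, phiv0101, phiv0102, phiv0110, phiv0111, phiv0112, phiv0120, phiv0121, phiv0122, phiv0200, phiv0201, phiv0202, phiv0210, phiv0211, phiv0212, phiv0220, phiv0221, phiv0222, phiv1000, phiv1001, phiv1002, phiv1010, phiv1011, phiv1012, phiv1020, phiv1021, phiv1022, phiv1100, phiv1101, phiv1102, phiv1110, phiv1111, phiv1112, phiv1120, phiv1121, phiv1122, phiv1200, phiv1201, phiv1202, phiv1210, phiv1211, phiv1212, phiv1220, phiv1221, phiv1222, map_neg, Complex.conj_ofReal, map_zero,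
      Matrix.smul_apply, Matrix.one_apply, Prod.mk.injEq, Fin.isValue, smul_eq_mul] <;>
      norm_num [Fin.ext_iff] <;>
      first
        | linear_combination (2:ℂ)*ha
        | linear_combination (-2:ℂ)*ha
        | linear_combination (4:ℂ)*ha
        | linear_combination (-4:ℂ)*ha
        | ring
  have hrhoAC : rhoAC a b = ((1 : ℂ) / 6) • 1 := by
    ext ⟨i,j⟩ ⟨k,l⟩
    fin_cases i <;> fin_cases j <;> fin_cases k <;> fin_cases l <;>
      simp only [rhoAC, rho2333, Matrix.of_apply, Fin.sum_univ_two, Fin.sum_univ_three, fin3_mk2,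
      Fin.mk_zero, Fin.mk_one, phiv0000, phiv0001, phiv0002, phiv0010, phiv0011, phiv0012, phiv0020, phiv0021, phiv0022, phiv0100, phiv0101, phiv0102, phiv0110, phiv0111, phiv0112, phiv0120, phiv0121, phiv0122, phiv0200, phiv0201, phiv0202, phiv0210, phiv0211, phiv0212, phiv0220, phiv0221, phiv0222, phiv1000, phiv1001, phiv1002, phiv1010, phiv1011, phiv1012, phiv1020, phiv1021, phiv1022, phiv1100, phiv1101, phiv1102, phiv1110, phiv1111, phiv1112, phiv1120, phiv1121, phiv1122, phiv1200, phiv1201, phiv1202, phiv1210, phiv1211, phiv1212, phiv1220, phiv1221, phiv1222, map_neg, Complex.conj_ofReal, map_zero,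
      Matrix.smul_apply, Matrix.one_apply, Prod.mk.injEq, Fin.isValue, smul_eq_mul] <;>
      norm_num [Fin.ext_iff] <;>
      first
        | linear_combination (2:ℂ)*ha
        | linear_combination (-2:ℂ)*ha
        | linear_combination (4:ℂ)*ha
        | linear_combination (-4:ℂ)*ha
        | ring
  have hrhoAD : rhoAD a b = ((1 : ℂ) / 6) • 1 := by
    ext ⟨i,j⟩ ⟨k,l⟩
    fin_cases i <;> fin_cases j <;> fin_cases k <;> fin_cases l <;>
      simp only [rhoAD, rho2333, Matrix.of_apply, Fin.sum_univ_two, Fin.sum_univ_three, fin3_mk2,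
      Fin.mk_zero, Fin.mk_one, phiv0000, phiv0001, phiv0002, phiv0010, phiv0011, phiv0012, phiv0020, phiv0021, phiv0022, phiv0100, phiv0101, phiv0102, phiv0110, phiv0111, phiv0112, phiv0120, phiv0121, phiv0122, phiv0200, phiv0201, phiv0202, phiv0210, phiv0211, phiv0212, phiv0220, phiv0221, phiv0222, phiv1000, phiv1001, phiv1002, phiv1010, phiv1011, phiv1012, phiv1020, phiv1021, phiv1022, phiv1100, phiv1101, phiv1102, phiv1110, phiv1111, phiv1112, phiv1120, phiv1121, phiv1122, phiv1200, phiv1201, phiv1202, phiv1210, phiv1211, phiv1212, phiv1220, phiv1221, phiv1222, map_neg, Complex.conj_ofReal, map_zero,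
      Matrix.smul_apply, Matrix.one_apply, Prod.mk.injEq, Fin.isValue, smul_eq_mul] <;>
      norm_num [Fin.ext_iff] <;>
      first
        | linear_combination (2:ℂ)*ha
        | linear_combination (-2:ℂ)*ha
        | linear_combination (4:ℂ)*ha
        | linear_combination (-4:ℂ)*ha
        | ring
  have hrhoB : rhoB a b = ((1 : ℂ) / 3) • 1 := by
    ext p q
    fin_cases p <;> fin_cases q <;>
      simp only [rhoB, rho2333, Matrix.of_apply, Fin.sum_univ_two, Fin.sum_univ_three, fin3_mk2,
      Fin.mk_zero, Fin.mk_one, phiv0000, phiv0001, phiv0002, phiv0010, phiv0011, phiv0012, phiv0020, phiv0021, phiv0022, phiv0100, phiv0101, phiv0102, phiv0110, phiv0111, phiv0112, phiv0120, phiv0121, phiv0122, phiv0200, phiv0201, phiv0202, phiv0210, phiv0211, phiv0212, phiv0220, phiv0221, phiv0222, phiv1000, phiv1001, phiv1002, phiv1010, phiv1011, phiv1012, phiv1020, phiv1021, phiv1022, phiv1100, phiv1101, phiv1102, phiv1110, phiv1111, phiv1112, phiv1120, phiv1121, phiv1122, phiv1200, phiv1201, phiv1202, phiv1210, phiv1211,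 phiv1212, phiv1220, phiv1221, phiv1222, map_neg, Complex.conj_ofReal, map_zero,
      Matrix.smul_apply, Matrix.one_apply, Prod.mk.injEq, Fin.isValue, smul_eq_mul] <;>
      norm_num [Fin.ext_iff] <;>
      first
        | linear_combination (4:ℂ)*ha
        | linear_combination (-4:ℂ)*ha
        | ring
  have hrhoC : rhoC a b = ((1 : ℂ) / 3) • 1 := by
    ext p q
    fin_cases p <;> fin_cases q <;>
      simp only [rhoC, rho2333, Matrix.of_apply, Fin.sum_univ_two, Fin.sum_univ_three, fin3_mk2,
      Fin.mk_zero, Fin.mk_one, phiv0000, phiv0001, phiv0002, phiv0010, phiv0011, phiv0012, phiv0020, phiv0021, phiv0022, phiv0100, phiv0101, phiv0102, phiv0110, phiv0111, phiv0112, phiv0120, phiv0121, phiv0122, phiv0200, phiv0201, phiv0202, phiv0210, phiv0211, phiv0212, phiv0220, phiv0221, phiv0222, phiv1000, phiv1001, phiv1002, phiv1010, phiv1011, phiv1012, phiv1020, phiv1021, phiv1022, phiv1100, phiv1101, phiv1102, phiv1110, phiv1111, phiv1112, phiv1120, phiv1121, phiv1122, phiv1200, phiv1201, phiv1202, phiv1210,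 phiv1211, phiv1212, phiv1220, phiv1221, phiv1222, map_neg, Complex.conj_ofReal, map_zero,
      Matrix.smul_apply, Matrix.one_apply, Prod.mk.injEq, Fin.isValue, smul_eq_mul] <;>
      norm_num [Fin.ext_iff] <;>
      first
        | linear_combination (4:ℂ)*ha
        | linear_combination (-4:ℂ)*ha
        | ring
  have hrhoD : rhoD a b = ((1 : ℂ) / 3) • 1 := by
    ext p q
    fin_cases p <;> fin_cases q <;>
      simp only [rhoD, rho2333, Matrix.of_apply, Fin.sum_univ_two, Fin.sum_univ_three, fin3_mk2,
      Fin.mk_zero, Fin.mk_one, phiv0000, phiv0001, phiv0002, phiv0010, phiv0011, phiv0012, phiv0020, phiv0021, phiv0022, phiv0100, phiv0101, phiv0102, phiv0110, phiv0111, phiv0112, phiv0120, phiv0121, phiv0122, phiv0200, phiv0201, phiv0202, phiv0210, phiv0211, phiv0212, phiv0220, phiv0221, phiv0222, phiv1000, phiv1001, phiv1002, phiv1010, phiv1011, phiv1012, phiv1020, phiv1021, phiv1022, phiv1100, phiv1101, phiv1102, phiv1110, phiv1111, phiv1112, phiv1120, phiv1121, phiv1122, phiv1200, phiv1201, phiv1202,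 phiv1210, phiv1211, phiv1212, phiv1220, phiv1221, phiv1222, map_neg, Complex.conj_ofReal, map_zero,
      Matrix.smul_apply, Matrix.one_apply, Prod.mk.injEq, Fin.isValue, smul_eq_mul] <;>
      norm_num [Fin.ext_iff] <;>
      first
        | linear_combination (4:ℂ)*ha
        | linear_combination (-4:ℂ)*ha
        | ring
  exact ⟨hnorm, hrhoAB, hrhoAC, hrhoAD, hrhoB, hrhoC, hrhoD⟩
end
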